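/- Suppose the conditional IV assumptions and positivity hold and, for every x ∈ 𝒳: δ^D(x) ≠ 0 and the conditional no-interaction assumption A5.b holds within stratum x, i.e. E[Y1 − Y0 | X=x, U=u] = E[Y1 − Y0 | X=x] for every u ∈ 𝒰. Then the marginal average treatment effect equals the average Wald estimand: E[Y1 − Y0] = Σ_{x∈𝒳} μ(X=x) · ( E[Y | Z=1, X=x] − E[Y | Z=0, X=x] ) / ( E[D | Z=1, X=x] − E[D | Z=0, X=x] ). -/

import Mathlib

open MeasureTheory ProbabilityTheory

/-- Conditional mean of `W` given event `A`: `E[W | A] = (∫_A W dμ) / μ(A)`. -/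
noncomputable def condMean {Ω : Type*} [MeasurableSpace Ω] (μ : Measure Ω)
    (W : Ω → ℝ) (A : Set Ω) : ℝ :=
  (∫ ω in A, W ω ∂μ) / (μ A).toReal

section Aux

variable {Ω : Type*} [MeasurableSpace Ω] {μ : Measure Ω}

lemma condMean_spec {W : Ω → ℝ} {A : Set Ω} (h : (μ A).toReal ≠ 0) :
    (μ A).toReal * condMean μ W A = ∫ ω in A, W ω ∂μ := by
  unfold condMean
  field_simp

lemma integral_partition {𝒰 : Type*} [Fintype 𝒰] [MeasurableSpace 𝒰]
    [MeasurableSingletonClass 𝒰]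
    {U : Ω → 𝒰} (hU : Measurable U) {W : Ω → ℝ} (hW : Integrable W μ)
    {A : Set Ω} (hA : MeasurableSet A) :
    ∫ ω in A, W ω ∂μ = ∑ u : 𝒰, ∫ ω in A ∩ {ω | U ω = u}, W ω ∂μ := by
  have h1 : A = ⋃ u ∈ (Finset.univ : Finset 𝒰), A ∩ {ω | U ω = u} := by
    ext ω; simp
  conv_lhs => rw [h1]
  rw [integral_biUnion_finset]
  · intro u _; exact hA.inter (hU (measurableSet_singleton u))
  · intro u _ v _ huv
    simp only [Function.onFun]
    apply Set.disjoint_left.mpr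
    rintro ω ⟨_, h1⟩ ⟨_, h2⟩
    exact huv (by simp only [Set.mem_setOf_eq] at h1 h2; rw [← h1, ← h2])
  · intro u _; exact hW.integrableOn

lemma condMean_partition {𝒰 : Type*} [Fintype 𝒰] [MeasurableSpace 𝒰]
    [MeasurableSingletonClass 𝒰] [IsFiniteMeasure μ]
    {U : Ω → 𝒰} (hU : Measurable U) {W : Ω → ℝ} (hW : Integrable W μ)
    {A : Set Ω} (hA : MeasurableSet A)
    (hpos : ∀ u : 𝒰, 0 < μ (A ∩ {ω | U ω = u})) :
    condMean μ W A = ∑ u : 𝒰, ((μ (A ∩ {ω | U ω = u})).toReal / (μ A).toReal)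
      * condMean μ W (A ∩ {ω | U ω = u}) := by
  have hterm : ∀ u : 𝒰, ((μ (A ∩ {ω | U ω = u})).toReal / (μ A).toReal)
      * condMean μ W (A ∩ {ω | U ω = u})
      = (∫ ω in A ∩ {ω | U ω = u}, W ω ∂μ) / (μ A).toReal := by
    intro u
    have hne : (μ (A ∩ {ω | U ω = u})).toReal ≠ 0 :=
      ENNReal.toReal_ne_zero.mpr ⟨(hpos u).ne', measure_ne_top _ _⟩
    unfold condMean
    rw [mul_comm, div_mul_div_comm,
      mul_comm (∫ ω in A ∩ {ω | U ω = u}, W ω ∂μ) ((μ (A ∩ {ω | U ω = u})).toReal),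
      mul_div_mul_left _ _ hne]
  simp only [hterm]
  rw [← Finset.sum_div]
  unfold condMean
  rw [integral_partition hU hW hA]

lemma integrable_cond {W : Ω → ℝ} (hW : Integrable W μ) {S : Set Ω} (hS : μ S ≠ 0) :
    Integrable W (μ[|S]) := by
  rw [ProbabilityTheory.cond]
  exact hW.restrict.smul_measure (ENNReal.inv_ne_top.mpr hS)

lemma integral_cond [IsFiniteMeasure μ] (W : Ω → ℝ) {S : Set Ω} :
    ∫ ω, W ω ∂(μ[|S]) = condMean μ W S := by
  rw [ProbabilityTheory.cond, integral_smul_measure, ENNReal.toReal_inv, condMean,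
    smul_eq_mul, div_eq_inv_mul]

lemma condMean_cond [IsFiniteMeasure μ] (W : Ω → ℝ) {S T : Set Ω}
    (hS : MeasurableSet S) (hT : MeasurableSet T) (hSne : μ S ≠ 0) :
    condMean (μ[|S]) W T = condMean μ W (S ∩ T) := by
  have hinv : ((μ S)⁻¹).toReal ≠ 0 := by
    rw [ENNReal.toReal_inv]
    exact inv_ne_zero (ENNReal.toReal_ne_zero.mpr ⟨hSne, measure_ne_top _ _⟩)
  unfold condMean
  rw [cond_apply hS, show (μ[|S]).restrict T = (μ S)⁻¹ • μ.restrict (T ∩ S) by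
      rw [ProbabilityTheory.cond, Measure.restrict_smul, Measure.restrict_restrict hT],
    integral_smul_measure, ENNReal.toReal_mul, smul_eq_mul, Set.inter_comm T S]
  rw [mul_div_mul_left _ _ hinv]

lemma condMean_sub [IsFiniteMeasure μ] {Y1 Y0 : Ω → ℝ} (h1 : Integrable Y1 μ)
    (h0 : Integrable Y0 μ) (S : Set Ω) :
    condMean μ (fun ω => Y1 ω - Y0 ω) S = condMean μ Y1 S - condMean μ Y0 S := by
  unfold condMean
  rw [integral_sub h1.integrableOn h0.integrableOn, sub_div]

/-- Core single-cell Wald decomposition under a probability measure where the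
potential outcomes are independent of `(Z, D)`. -/
lemma wald_core (ν : Measure Ω) [IsProbabilityMeasure ν]
    (Z D Y1 Y0 Y : Ω → ℝ) (hZ : Measurable Z) (hD : Measurable D)
    (hD01 : ∀ ω, D ω = 0 ∨ D ω = 1)
    (hY1 : Integrable Y1 ν) (hY0 : Integrable Y0 ν)
    (hYdef : ∀ ω, Y ω = D ω * Y1 ω + (1 - D ω) * Y0 ω)
    (hind1 : IndepFun Y1 (fun ω => (Z ω, D ω)) ν)
    (hind0 : IndepFun Y0 (fun ω => (Z ω, D ω)) ν)
    (z : ℝ) (hz : ν {ω | Z ω = z} ≠ 0) :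
    condMean ν Y {ω | Z ω = z}
      = (∫ ω, Y1 ω ∂ν) * condMean ν D {ω | Z ω = z}
        + (∫ ω, Y0 ω ∂ν) * (1 - condMean ν D {ω | Z ω = z}) := by
  set A : Set Ω := {ω | Z ω = z} with hA_def
  have hAm : MeasurableSet A := hZ (measurableSet_singleton z)
  set g1 : Ω → ℝ := fun ω => ({z} : Set ℝ).indicator (fun _ => (1:ℝ)) (Z ω) * D ω with hg1
  set g0 : Ω → ℝ := fun ω => ({z} : Set ℝ).indicator (fun _ => (1:ℝ)) (Z ω) * (1 - D ω)
    with hg0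
  have hφ1 : Measurable (fun q : ℝ × ℝ => ({z} : Set ℝ).indicator (fun _ => (1:ℝ)) q.1 * q.2) :=
    ((measurable_const.indicator (measurableSet_singleton z)).comp measurable_fst).mul
      measurable_snd
  have hφ0 : Measurable (fun q : ℝ × ℝ =>
      ({z} : Set ℝ).indicator (fun _ => (1:ℝ)) q.1 * (1 - q.2)) :=
    ((measurable_const.indicator (measurableSet_singleton z)).comp measurable_fst).mul
      (measurable_const.sub measurable_snd)
  have hg1m : Measurable g1 := hφ1.comp ((hZ.prodMk hD))
  have hg0m : Measurable g0 := hφ0.comp ((hZ.prodMk hD))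
  have hg1bd : ∀ ω, ‖g1 ω‖ ≤ 1 := by
    intro ω
    rcases hD01 ω with h | h <;> by_cases hω : Z ω ∈ ({z} : Set ℝ) <;> rw [Set.mem_singleton_iff] at hω <;>
      simp [hg1, h, Set.indicator_of_mem, Set.indicator_of_notMem, hω, Pi.single_apply]
  have hg0bd : ∀ ω, ‖g0 ω‖ ≤ 1 := by
    intro ω
    rcases hD01 ω with h | h <;> by_cases hω : Z ω ∈ ({z} : Set ℝ) <;> rw [Set.mem_singleton_iff] at hω <;>
      simp [hg0, h, Set.indicator_of_mem, Set.indicator_of_notMem, hω, Pi.single_apply]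
  have hg1int : Integrable g1 ν :=
    (integrable_const (1:ℝ)).mono' hg1m.aestronglyMeasurable (ae_of_all _ hg1bd)
  have hg0int : Integrable g0 ν :=
    (integrable_const (1:ℝ)).mono' hg0m.aestronglyMeasurable (ae_of_all _ hg0bd)
  have hDint : Integrable D ν := by
    refine (integrable_const (1:ℝ)).mono' hD.aestronglyMeasurable (ae_of_all _ ?_)
    intro ω; rcases hD01 ω with h | h <;> simp [h]
  -- independence products
  have hI1 : IndepFun Y1 g1 ν := hind1.comp measurable_id hφ1
  have hI0 : IndepFun Y0 g0 ν := hind0.comp measurable_id hφ0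
  have hE1 : ∫ ω, (Y1 ω * g1 ω) ∂ν = (∫ ω, Y1 ω ∂ν) * (∫ ω, g1 ω ∂ν) :=
    hI1.integral_fun_mul_eq_mul_integral hY1.aestronglyMeasurable hg1int.aestronglyMeasurable
  have hE0 : ∫ ω, (Y0 ω * g0 ω) ∂ν = (∫ ω, Y0 ω ∂ν) * (∫ ω, g0 ω ∂ν) :=
    hI0.integral_fun_mul_eq_mul_integral hY0.aestronglyMeasurable hg0int.aestronglyMeasurable
  -- integrals of g1, g0
  have hind_mem : ∀ ω, ({z} : Set ℝ).indicator (fun _ => (1:ℝ)) (Z ω)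
      = A.indicator (fun _ => (1:ℝ)) ω := by
    intro ω
    by_cases hω : Z ω = z <;>
      simp [Set.indicator_apply, hA_def, Set.mem_setOf_eq, hω]
  have hg1eq : g1 = A.indicator D := by
    funext ω
    simp only [hg1, hind_mem ω]
    by_cases hω : ω ∈ A
    · simp [Set.indicator_of_mem hω]
    · simp [Set.indicator_of_notMem hω]
  have hg0eq : g0 = A.indicator (fun ω => 1 - D ω) := by
    funext ω
    simp only [hg0, hind_mem ω]
    by_cases hω : ω ∈ A
    · simp [Set.indicator_of_mem hω]
    · simp [Set.indicator_of_notMem hω]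
  have hIg1 : ∫ ω, g1 ω ∂ν = ∫ ω in A, D ω ∂ν := by
    rw [hg1eq, integral_indicator hAm]
  have hIg0 : ∫ ω, g0 ω ∂ν = (ν A).toReal - ∫ ω in A, D ω ∂ν := by
    rw [hg0eq, integral_indicator hAm,
      integral_sub (integrable_const (1:ℝ)).integrableOn hDint.integrableOn]
    simp [setIntegral_const, measureReal_def]
  -- decompose the integral of Y over A
  have hYsplit : ∫ ω in A, Y ω ∂ν
      = (∫ ω, (Y1 ω * g1 ω) ∂ν) + (∫ ω, (Y0 ω * g0 ω) ∂ν) := by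
    rw [← integral_indicator hAm]
    have heq : A.indicator Y = fun ω => Y1 ω * g1 ω + Y0 ω * g0 ω := by
      funext ω
      by_cases hω : ω ∈ A
      · rw [Set.indicator_of_mem hω, hYdef ω]
        simp only [hg1, hg0, hind_mem ω, Set.indicator_of_mem hω]
        ring
      · rw [Set.indicator_of_notMem hω]
        simp only [hg1, hg0, hind_mem ω, Set.indicator_of_notMem hω]
        ring
    rw [heq]
    refine integral_add ?_ ?_
    · exact ((hY1.bdd_mul (c := 1) hg1m.aestronglyMeasurable (ae_of_all _ hg1bd)).congr
        (ae_of_all _ fun ω => mul_comm (g1 ω) (Y1 ω)))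
    · exact ((hY0.bdd_mul (c := 1) hg0m.aestronglyMeasurable (ae_of_all _ hg0bd)).congr
        (ae_of_all _ fun ω => mul_comm (g0 ω) (Y0 ω)))
  have htA : (ν A).toReal ≠ 0 :=
    ENNReal.toReal_ne_zero.mpr ⟨hz, measure_ne_top _ _⟩
  unfold condMean
  rw [hYsplit, hE1, hE0, hIg1, hIg0]
  field_simp

/-- A2 consequence: the conditional weight of `U = u` given `Z = z, X = x`
does not depend on `z`. -/
lemma weight_eq [IsFiniteMeasure μ] {Sx Sz Su : Set Ω}
    (hx : MeasurableSet Sx)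
    (hA2 : (μ[|Sx]) (Sz ∩ Su) = (μ[|Sx]) Sz * (μ[|Sx]) Su)
    (hbz : μ (Sz ∩ Sx) ≠ 0) (hxne : μ Sx ≠ 0) :
    (μ ((Sz ∩ Sx) ∩ Su)).toReal / (μ (Sz ∩ Sx)).toReal
      = (μ (Sx ∩ Su)).toReal / (μ Sx).toReal := by
  have h1 : (μ Sx)⁻¹ * μ (Sx ∩ (Sz ∩ Su))
      = ((μ Sx)⁻¹ * μ (Sx ∩ Sz)) * ((μ Sx)⁻¹ * μ (Sx ∩ Su)) := by
    rw [← cond_apply hx, ← cond_apply hx, ← cond_apply hx]; exact hA2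
  have hset1 : Sx ∩ (Sz ∩ Su) = (Sz ∩ Sx) ∩ Su := by
    ext ω; simp only [Set.mem_inter_iff]; tauto
  have hset2 : Sx ∩ Sz = Sz ∩ Sx := Set.inter_comm _ _
  rw [hset1, hset2] at h1
  have h2 := congrArg ENNReal.toReal h1
  simp only [ENNReal.toReal_mul, ENNReal.toReal_inv] at h2
  set a := (μ Sx).toReal
  set b := (μ (Sz ∩ Sx)).toReal
  set c := (μ (Sx ∩ Su)).toReal
  set d := (μ ((Sz ∩ Sx) ∩ Su)).toReal
  have ha : a ≠ 0 := ENNReal.toReal_ne_zero.mpr ⟨hxne, measure_ne_top _ _⟩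
  have hb : b ≠ 0 := ENNReal.toReal_ne_zero.mpr ⟨hbz, measure_ne_top _ _⟩
  field_simp at h2 ⊢
  have h3 : d * a = b * c := mul_right_cancel₀ ha (by linear_combination a * h2)
  linear_combination h3

end Aux

/-- under the conditional IV assumptions and positivity, if within
every stratum `x` we have `δ^D(x) ≠ 0` and the conditional no-interaction
assumption A5.b (`E[Y1 − Y0 | X=x, U=u] = E[Y1 − Y0 | X=x]` for every `u`), then
the marginal ATE equals the average Wald estimand:
`E[Y1 − Y0] = Σ_x μ(X=x) (E[Y|Z=1,X=x] − E[Y|Z=0,X=x]) / (E[D|Z=1,X=x] − E[D|Z=0,X=x])`. -/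
theorem ate_equals_average_wald
    {Ω : Type*} [MeasurableSpace Ω] (μ : Measure Ω) [IsProbabilityMeasure μ]
    {𝒳 : Type*} [Fintype 𝒳] [MeasurableSpace 𝒳] [MeasurableSingletonClass 𝒳]
    {𝒰 : Type*} [Fintype 𝒰] [MeasurableSpace 𝒰] [MeasurableSingletonClass 𝒰]
    (Z D Y1 Y0 Y : Ω → ℝ) (X : Ω → 𝒳) (U : Ω → 𝒰)
    (hZmeas : Measurable Z) (hDmeas : Measurable D)
    (hXmeas : Measurable X) (hUmeas : Measurable U)
    (hZ01 : ∀ ω, Z ω = 0 ∨ Z ω = 1) (hD01 : ∀ ω, D ω = 0 ∨ D ω = 1)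
    (hY1int : Integrable Y1 μ) (hY0int : Integrable Y0 μ)
    (hYdef : ∀ ω, Y ω = D ω * Y1 ω + (1 - D ω) * Y0 ω)
    -- (A2) conditionally on X = x, Z is independent of U
    (hA2 : ∀ (x : 𝒳) (z : ℝ) (u : 𝒰),
      (μ[|{ω | X ω = x}]) ({ω | Z ω = z} ∩ {ω | U ω = u})
        = (μ[|{ω | X ω = x}]) {ω | Z ω = z} * (μ[|{ω | X ω = x}]) {ω | U ω = u})
    -- (A1′, A4) under μ(· | X = x, U = u), each potential outcome is independent
    -- of the pair (Z, D)
    (hA14one : ∀ (x : 𝒳) (u : 𝒰),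
      IndepFun Y1 (fun ω => (Z ω, D ω)) (μ[|{ω | X ω = x} ∩ {ω | U ω = u}]))
    (hA14zero : ∀ (x : 𝒳) (u : 𝒰),
      IndepFun Y0 (fun ω => (Z ω, D ω)) (μ[|{ω | X ω = x} ∩ {ω | U ω = u}]))
    -- positivity
    (hPos : ∀ (z : ℝ), (z = 0 ∨ z = 1) → ∀ (x : 𝒳) (u : 𝒰),
      0 < μ ({ω | Z ω = z} ∩ {ω | X ω = x} ∩ {ω | U ω = u}))
    -- δ^D(x) ≠ 0 for every x
    (hδDne : ∀ x : 𝒳,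
      condMean μ D ({ω | Z ω = 1} ∩ {ω | X ω = x})
        - condMean μ D ({ω | Z ω = 0} ∩ {ω | X ω = x}) ≠ 0)
    -- (A5.b) conditional no additive U–d interaction within each stratum x
    (hA5b : ∀ (x : 𝒳) (u : 𝒰),
      condMean μ (fun ω => Y1 ω - Y0 ω) ({ω | X ω = x} ∩ {ω | U ω = u})
        = condMean μ (fun ω => Y1 ω - Y0 ω) {ω | X ω = x}) :
    (∫ ω, (Y1 ω - Y0 ω) ∂μ)
      = ∑ x : 𝒳, (μ {ω | X ω = x}).toReal
          * ((condMean μ Y ({ω | Z ω = 1} ∩ {ω | X ω = x})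
              - condMean μ Y ({ω | Z ω = 0} ∩ {ω | X ω = x}))
            / (condMean μ D ({ω | Z ω = 1} ∩ {ω | X ω = x})
              - condMean μ D ({ω | Z ω = 0} ∩ {ω | X ω = x}))) := by
  classical
  -- nonemptiness
  have hΩne : Nonempty Ω := by
    by_contra h
    have huniv : (Set.univ : Set Ω) = ∅ := Set.univ_eq_empty_iff.mpr (not_nonempty_iff.mp h)
    have h0 : (μ Set.univ) = 0 := by rw [huniv]; exact measure_empty
    rw [measure_univ] at h0
    exact one_ne_zero h0
  have h𝒰ne : Nonempty 𝒰 := ⟨U hΩne.some⟩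
  obtain ⟨u₀⟩ := h𝒰ne
  -- basic measurability
  have hZz : ∀ z : ℝ, MeasurableSet {ω | Z ω = z} :=
    fun z => hZmeas (measurableSet_singleton z)
  have hXx : ∀ x : 𝒳, MeasurableSet {ω | X ω = x} :=
    fun x => hXmeas (measurableSet_singleton x)
  have hUu : ∀ u : 𝒰, MeasurableSet {ω | U ω = u} :=
    fun u => hUmeas (measurableSet_singleton u)
  -- positivity consequences
  have hpos_zxu : ∀ (z : ℝ), (z = 0 ∨ z = 1) → ∀ (x : 𝒳) (u : 𝒰),
      0 < μ (({ω | Z ω = z} ∩ {ω | X ω = x}) ∩ {ω | U ω = u}) := hPos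
  have hpos_zx : ∀ (z : ℝ), (z = 0 ∨ z = 1) → ∀ x : 𝒳,
      0 < μ ({ω | Z ω = z} ∩ {ω | X ω = x}) := by
    intro z hz x
    exact lt_of_lt_of_le (hpos_zxu z hz x u₀) (measure_mono Set.inter_subset_left)
  have hpos_x : ∀ x : 𝒳, 0 < μ {ω | X ω = x} := by
    intro x
    refine lt_of_lt_of_le (hpos_zxu 1 (Or.inr rfl) x u₀) (measure_mono ?_)
    rintro ω ⟨⟨_, hx⟩, _⟩; exact hx
  have hpos_su : ∀ (x : 𝒳) (u : 𝒰), 0 < μ ({ω | X ω = x} ∩ {ω | U ω = u}) := by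
    intro x u
    refine lt_of_lt_of_le (hpos_zxu 1 (Or.inr rfl) x u) (measure_mono ?_)
    rintro ω ⟨⟨_, hx⟩, hu⟩; exact ⟨hx, hu⟩
  -- integrability of D and Y
  have hDint : Integrable D μ := by
    refine (integrable_const (1:ℝ)).mono' hDmeas.aestronglyMeasurable (ae_of_all _ ?_)
    intro ω; rcases hD01 ω with h | h <;> simp [h]
  have hYint : Integrable Y μ := by
    have h1 : Integrable (fun ω => D ω * Y1 ω) μ :=
      hY1int.bdd_mul (c := 1) hDmeas.aestronglyMeasurable
        (ae_of_all _ fun ω => by rcases hD01 ω with h | h <;> simp [h])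
    have h0 : Integrable (fun ω => (1 - D ω) * Y0 ω) μ :=
      hY0int.bdd_mul (c := 1) (measurable_const.sub hDmeas).aestronglyMeasurable
        (ae_of_all _ fun ω => by rcases hD01 ω with h | h <;> simp [h])
    exact (h1.add h0).congr (ae_of_all _ fun ω => (hYdef ω).symm)
  -- the stratum-specific average treatment effect
  set τ : 𝒳 → ℝ := fun x => condMean μ (fun ω => Y1 ω - Y0 ω) {ω | X ω = x} with hτ
  -- per-cell conditional mean of Y
  have cell : ∀ (x : 𝒳) (u : 𝒰) (z : ℝ), (z = 0 ∨ z = 1) →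
      condMean μ Y (({ω | Z ω = z} ∩ {ω | X ω = x}) ∩ {ω | U ω = u})
        = condMean μ Y1 ({ω | X ω = x} ∩ {ω | U ω = u})
            * condMean μ D (({ω | Z ω = z} ∩ {ω | X ω = x}) ∩ {ω | U ω = u})
          + condMean μ Y0 ({ω | X ω = x} ∩ {ω | U ω = u})
            * (1 - condMean μ D (({ω | Z ω = z} ∩ {ω | X ω = x}) ∩ {ω | U ω = u})) := by
    intro x u z hz
    set S := {ω | X ω = x} ∩ {ω | U ω = u} with hS
    have hSm : MeasurableSet S := (hXx x).inter (hUu u)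
    have hSne : μ S ≠ 0 := (hpos_su x u).ne'
    haveI : IsProbabilityMeasure (μ[|S]) := cond_isProbabilityMeasure hSne
    have hsetz : ({ω | Z ω = z} ∩ {ω | X ω = x}) ∩ {ω | U ω = u} = S ∩ {ω | Z ω = z} := by
      ext ω
      simp only [hS, Set.mem_inter_iff, Set.mem_setOf_eq]
      tauto
    have hνz : (μ[|S]) {ω | Z ω = z} ≠ 0 := by
      rw [cond_apply hSm]
      refine mul_ne_zero (ENNReal.inv_ne_zero.mpr (measure_ne_top _ _)) ?_
      rw [← hsetz]
      exact (hpos_zxu z hz x u).ne'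
    have hw := wald_core (μ[|S]) Z D Y1 Y0 Y hZmeas hDmeas hD01
      (integrable_cond hY1int hSne) (integrable_cond hY0int hSne) hYdef
      (hA14one x u) (hA14zero x u) z hνz
    rw [condMean_cond Y hSm (hZz z) hSne, condMean_cond D hSm (hZz z) hSne,
      integral_cond, integral_cond] at hw
    rw [hsetz]
    exact hw
  -- stratum-level Wald identity
  have stratum : ∀ x : 𝒳,
      condMean μ Y ({ω | Z ω = 1} ∩ {ω | X ω = x})
        - condMean μ Y ({ω | Z ω = 0} ∩ {ω | X ω = x})
      = τ x * (condMean μ D ({ω | Z ω = 1} ∩ {ω | X ω = x})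
        - condMean μ D ({ω | Z ω = 0} ∩ {ω | X ω = x})) := by
    intro x
    set q : 𝒰 → ℝ := fun u => (μ ({ω | X ω = x} ∩ {ω | U ω = u})).toReal
        / (μ {ω | X ω = x}).toReal with hq
    have hw_eq : ∀ (z : ℝ), (z = 0 ∨ z = 1) → ∀ u : 𝒰,
        (μ (({ω | Z ω = z} ∩ {ω | X ω = x}) ∩ {ω | U ω = u})).toReal
          / (μ ({ω | Z ω = z} ∩ {ω | X ω = x})).toReal = q u := by
      intro z hz u
      exact weight_eq (hXx x) (hA2 x z u) (hpos_zx z hz x).ne' (hpos_x x).ne'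
    have hpart : ∀ (W : Ω → ℝ), Integrable W μ → ∀ (z : ℝ), (z = 0 ∨ z = 1) →
        condMean μ W ({ω | Z ω = z} ∩ {ω | X ω = x})
          = ∑ u : 𝒰, q u
            * condMean μ W (({ω | Z ω = z} ∩ {ω | X ω = x}) ∩ {ω | U ω = u}) := by
      intro W hW z hz
      rw [condMean_partition hUmeas hW ((hZz z).inter (hXx x)) (fun u => hpos_zxu z hz x u)]
      exact Finset.sum_congr rfl fun u _ => by rw [hw_eq z hz u]
    have hδu : ∀ u : 𝒰,
        condMean μ Y (({ω | Z ω = 1} ∩ {ω | X ω = x}) ∩ {ω | U ω = u})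
          - condMean μ Y (({ω | Z ω = 0} ∩ {ω | X ω = x}) ∩ {ω | U ω = u})
        = τ x * (condMean μ D (({ω | Z ω = 1} ∩ {ω | X ω = x}) ∩ {ω | U ω = u})
          - condMean μ D (({ω | Z ω = 0} ∩ {ω | X ω = x}) ∩ {ω | U ω = u})) := by
      intro u
      have hm : condMean μ Y1 ({ω | X ω = x} ∩ {ω | U ω = u})
          - condMean μ Y0 ({ω | X ω = x} ∩ {ω | U ω = u}) = τ x := by
        rw [← condMean_sub hY1int hY0int]
        simp only [hτ]
        exact hA5b x u
      rw [cell x u 1 (Or.inr rfl), cell x u 0 (Or.inl rfl)]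
      set p1 := condMean μ D (({ω | Z ω = 1} ∩ {ω | X ω = x}) ∩ {ω | U ω = u})
      set p0 := condMean μ D (({ω | Z ω = 0} ∩ {ω | X ω = x}) ∩ {ω | U ω = u})
      set m1 := condMean μ Y1 ({ω | X ω = x} ∩ {ω | U ω = u})
      set m0 := condMean μ Y0 ({ω | X ω = x} ∩ {ω | U ω = u})
      linear_combination (p1 - p0) * hm
    rw [hpart Y hYint 1 (Or.inr rfl), hpart Y hYint 0 (Or.inl rfl),
      hpart D hDint 1 (Or.inr rfl), hpart D hDint 0 (Or.inl rfl),
      ← Finset.sum_sub_distrib, ← Finset.sum_sub_distrib, Finset.mul_sum]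
    refine Finset.sum_congr rfl fun u _ => ?_
    rw [← mul_sub, ← mul_sub, hδu u]
    ring
  -- total expectation over the strata
  have total : ∫ ω, (Y1 ω - Y0 ω) ∂μ = ∑ x : 𝒳, (μ {ω | X ω = x}).toReal * τ x := by
    have h1 : ∫ ω, (Y1 ω - Y0 ω) ∂μ = ∫ ω in Set.univ, (Y1 ω - Y0 ω) ∂μ := by
      rw [setIntegral_univ]
    rw [h1, integral_partition hXmeas (show Integrable (fun ω => Y1 ω - Y0 ω) μ from hY1int.sub hY0int) MeasurableSet.univ]
    simp only [Set.univ_inter]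
    refine Finset.sum_congr rfl fun x _ => ?_
    have hne : (μ {ω | X ω = x}).toReal ≠ 0 :=
      ENNReal.toReal_ne_zero.mpr ⟨(hpos_x x).ne', measure_ne_top _ _⟩
    simp only [hτ]
    exact (condMean_spec hne).symm
  rw [total]
  refine Finset.sum_congr rfl fun x _ => ?_
  congr 1
  rw [stratum x]
  exact (mul_div_cancel_right₀ _ (hδDne x)).symm
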